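/- Let (M, ℓ) be a forward metric spacetime in which every x ∈ M lies in the closure of I⁻(x). If (xₙ) is a ≤-bounded nondecreasing sequence converging topologically to x, then x is the ≤-supremum of (xₙ): xₙ ≤ x for all n, and every y with xₙ ≤ y for all n satisfies x ≤ y. -/
import Mathlib


open Filter Topology

/-- Limit from the past versus order supremum: in a forward metric spacetime in which
every point lies in the closure of its chronological past, if `(xₙ)` is a `≤`-bounded
nondecreasing sequence converging topologically to `x`, then `x` is the `≤`-supremum
of `(xₙ)`. -/
theorem limit_is_order_supremum
    {M : Type*} [inst : TopologicalSpace M] [PolishSpace M]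
    (ℓ : M → M → EReal)
    (htop : inst = TopologicalSpace.generateFrom
      {s : Set M | ∃ x : M, s = {y | 0 < ℓ x y} ∨ s = {y | 0 < ℓ y x}})
    (hrange : ∀ x y : M, ℓ x y ≠ ⊥ → 0 ≤ ℓ x y)
    (hrefl : ∀ x : M, 0 ≤ ℓ x x)
    (hrt : ∀ x y z : M, 0 ≤ ℓ x y → 0 ≤ ℓ y z → ℓ x y + ℓ y z ≤ ℓ x z)
    (hclosed : IsClosed {p : M × M | 0 ≤ ℓ p.1 p.2})
    (hforward : ∀ (y : ℕ → M) (a b : M), (∀ i, 0 ≤ ℓ a (y i)) →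
      (∀ i, 0 ≤ ℓ (y i) (y (i+1))) → (∀ i, 0 ≤ ℓ (y i) b) →
      ∃ p : M, Filter.Tendsto y Filter.atTop (nhds p))
    (happrox : ∀ x : M, x ∈ closure {z : M | 0 < ℓ z x})
    (x : M) (xs : ℕ → M)
    (hmono : ∀ n, 0 ≤ ℓ (xs n) (xs (n+1)))
    (hbdd : ∃ z : M, ∀ n, 0 ≤ ℓ (xs n) z)
    (hlim : Filter.Tendsto xs Filter.atTop (nhds x)) :
    (∀ n, 0 ≤ ℓ (xs n) x) ∧ ∀ y : M, (∀ n, 0 ≤ ℓ (xs n) y) → 0 ≤ ℓ x y := by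
  have htrans : ∀ a b c : M, 0 ≤ ℓ a b → 0 ≤ ℓ b c → 0 ≤ ℓ a c := by
    intro a b c h1 h2
    exact le_trans (by exact add_nonneg h1 h2) (hrt a b c h1 h2)
  have hchain : ∀ n m, n ≤ m → 0 ≤ ℓ (xs n) (xs m) := by
    intro n m hnm
    induction m with
    | zero => simpa [Nat.le_zero.mp hnm] using hrefl (xs 0)
    | succ m ih =>
      rcases Nat.lt_or_ge n (m+1) with h | h
      · exact htrans _ _ _ (ih (Nat.lt_succ_iff.mp h)) (hmono m)
      · simpa [le_antisymm hnm h] using hrefl (xs (m+1))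
  have key : ∀ (n : ℕ) (y : M), Tendsto (fun m => xs m) atTop (nhds y) →
      0 ≤ ℓ (xs n) y := by
    intro n y hy
    have ht : Tendsto (fun m => ((xs n, xs m) : M × M)) atTop (nhds (xs n, y)) :=
      (tendsto_const_nhds).prodMk_nhds hy
    exact hclosed.mem_of_tendsto ht
      (Filter.eventually_atTop.2 ⟨n, fun m hm => hchain n m hm⟩)
  refine ⟨fun n => key n x hlim, fun y hy => ?_⟩
  have ht : Tendsto (fun m => ((xs m, y) : M × M)) atTop (nhds (x, y)) :=
    hlim.prodMk_nhds tendsto_const_nhds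
  exact hclosed.mem_of_tendsto ht (Filter.Eventually.of_forall hy)
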